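/- Define the weight function w on (0,1] by: w(x) = 1 for x > 59/96; w(x) = 1 for x in (1/2,59/96] (c-items); w(x) = 1/2 for x in (37/96,1/2] (b-items); w(x) = 3/7 for x in (1/3,37/96] (a-items); w(x) = 1/(k+1) for x in (1/(k+2),1/(k+1)] with 2 ≤ k ≤ 18; and w(x) = 20x/19 for x ≤ 1/20. Then for any finite multiset of items with total size at most 1, the total weight is at most 373/228. -/

import Mathlib

/-- The weight function of Case 2 of the analysis of Refined Harmonic Match:
`w x = 1` for `x > 59/96` and for `x ∈ (1/2, 59/96]` (c-items), `w x = 1/2` for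
`x ∈ (37/96, 1/2]` (b-items), `w x = 3/7` for `x ∈ (1/3, 37/96]` (a-items),
`w x = 1/(k+1)` for `x ∈ (1/(k+2), 1/(k+1)]` with `2 ≤ k ≤ 18` (equivalently
`w x = 1/⌊1/x⌋` for `x ∈ (1/20, 1/3]`), and `w x = 20x/19` for `x ≤ 1/20`. -/
noncomputable def wCase2 (x : ℝ) : ℝ :=
  if 1 / 2 < x then 1
  else if 37 / 96 < x then 1 / 2
  else if 1 / 3 < x then 3 / 7
  else if 1 / 20 < x then 1 / (⌊1 / x⌋ : ℝ)
  else 20 * x / 19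

/-! ### Auxiliary predicates -/

noncomputable def q1 : ℝ → Bool := fun x => decide ((1:ℝ)/2 < x)
noncomputable def q2 : ℝ → Bool := fun x => decide ((37:ℝ)/96 < x ∧ x ≤ 1/2)
noncomputable def q3 : ℝ → Bool := fun x => decide ((1:ℝ)/3 < x ∧ x ≤ 37/96)
noncomputable def q4 : ℝ → Bool := fun x => decide ((1:ℝ)/4 < x ∧ x ≤ 1/3)
noncomputable def q5 : ℝ → Bool := fun x => decide ((1:ℝ)/5 < x ∧ x ≤ 1/4)
noncomputable def qS : ℝ → Bool := fun x => decide (x ≤ (1:ℝ)/5)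

/-! ### Evaluation of `wCase2` on the buckets -/

lemma wCase2_bucket1 (x : ℝ) (h1 : 1/2 < x) : wCase2 x = 1 := by
  rw [wCase2, if_pos h1]

lemma wCase2_bucket2 (x : ℝ) (h1 : 37/96 < x) (h2 : x ≤ 1/2) : wCase2 x = 1/2 := by
  rw [wCase2, if_neg (by linarith), if_pos h1]

lemma wCase2_bucket3 (x : ℝ) (h1 : 1/3 < x) (h2 : x ≤ 37/96) : wCase2 x = 3/7 := by
  rw [wCase2, if_neg (by linarith), if_neg (by linarith), if_pos h1]

lemma wCase2_bucket4 (x : ℝ) (h1 : 1/4 < x) (h2 : x ≤ 1/3) : wCase2 x = 1/3 := by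
  have hx : (0:ℝ) < x := by linarith
  have hfl : ⌊1/x⌋ = (3:ℤ) := by
    rw [Int.floor_eq_iff]
    constructor
    · push_cast
      rw [le_div_iff₀ hx]; linarith
    · push_cast
      rw [div_lt_iff₀ hx]; linarith
  rw [wCase2, if_neg (by linarith), if_neg (by linarith), if_neg (by linarith),
    if_pos (by linarith : (1:ℝ)/20 < x), hfl]
  norm_num

lemma wCase2_bucket5 (x : ℝ) (h1 : 1/5 < x) (h2 : x ≤ 1/4) : wCase2 x = 1/4 := by
  have hx : (0:ℝ) < x := by linarith
  have hfl : ⌊1/x⌋ = (4:ℤ) := by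
    rw [Int.floor_eq_iff]
    constructor
    · push_cast
      rw [le_div_iff₀ hx]; linarith
    · push_cast
      rw [div_lt_iff₀ hx]; linarith
  rw [wCase2, if_neg (by linarith), if_neg (by linarith), if_neg (by linarith),
    if_pos (by linarith : (1:ℝ)/20 < x), hfl]
  norm_num

lemma wCase2_small (x : ℝ) (h2 : x ≤ 1/20) : wCase2 x = 20 * x / 19 := by
  rw [wCase2, if_neg (by linarith), if_neg (by linarith), if_neg (by linarith),
    if_neg (by linarith)]

/-- slope bound for `x ≤ 1/5` -/
lemma wCase2_slope5 (x : ℝ) (hx : 0 < x) (h5 : x ≤ 1/5) : wCase2 x ≤ 6/5 * x := by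
  rcases le_or_gt x (1/20) with hs | hs
  · rw [wCase2_small x hs]; linarith
  · rw [wCase2, if_neg (by linarith), if_neg (by linarith), if_neg (by linarith), if_pos hs]
    have hfl : (5:ℤ) ≤ ⌊1/x⌋ := by
      apply Int.le_floor.2
      push_cast
      rw [le_div_iff₀ hx]; linarith
    have hfl' : (5:ℝ) ≤ (⌊1/x⌋:ℝ) := by exact_mod_cast hfl
    have hupb : 1/x < (⌊1/x⌋:ℝ) + 1 := Int.lt_floor_add_one _
    have hpos : (0:ℝ) < (⌊1/x⌋:ℝ) := by linarith
    rw [div_le_iff₀ hpos]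
    have h1 : 1 < ((⌊1/x⌋:ℝ) + 1) * x := by
      have := (div_lt_iff₀ hx).1 hupb
      linarith
    nlinarith [mul_nonneg (sub_nonneg.2 hfl') hx.le]

/-- slope bound for `x ≤ 1/8` -/
lemma wCase2_slope8 (x : ℝ) (hx : 0 < x) (h8 : x ≤ 1/8) : wCase2 x ≤ 9/8 * x := by
  rcases le_or_gt x (1/20) with hs | hs
  · rw [wCase2_small x hs]; linarith
  · rw [wCase2, if_neg (by linarith), if_neg (by linarith), if_neg (by linarith), if_pos hs]
    have hfl : (8:ℤ) ≤ ⌊1/x⌋ := by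
      apply Int.le_floor.2
      push_cast
      rw [le_div_iff₀ hx]; linarith
    have hfl' : (8:ℝ) ≤ (⌊1/x⌋:ℝ) := by exact_mod_cast hfl
    have hupb : 1/x < (⌊1/x⌋:ℝ) + 1 := Int.lt_floor_add_one _
    have hpos : (0:ℝ) < (⌊1/x⌋:ℝ) := by linarith
    rw [div_le_iff₀ hpos]
    have h1 : 1 < ((⌊1/x⌋:ℝ) + 1) * x := by
      have := (div_lt_iff₀ hx).1 hupb
      linarith
    nlinarith [mul_nonneg (sub_nonneg.2 hfl') hx.le]

/-! ### Summation helpers -/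

lemma sum_map_add (f g : ℝ → ℝ) (l : List ℝ) :
    (l.map fun x => f x + g x).sum = (l.map f).sum + (l.map g).sum := by
  induction l with
  | nil => simp
  | cons a tl ih => simp [ih]; ring

lemma sum_map_smul (c : ℝ) (f : ℝ → ℝ) (l : List ℝ) :
    (l.map fun x => c * f x).sum = c * (l.map f).sum := by
  induction l with
  | nil => simp
  | cons a tl ih => simp [ih]; ring

lemma sum_map_ind (q : ℝ → Bool) (l : List ℝ) :
    (l.map fun x => if q x then (1:ℝ) else 0).sum = (l.countP q : ℝ) := by
  induction l with
  | nil => simp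
  | cons a tl ih =>
    rw [List.map_cons, List.sum_cons, ih, List.countP_cons]
    cases hq : q a <;> simp [hq] <;> push_cast <;> ring

/-! ### Pointwise bounds -/

/-- The weight is bounded by the bucket caps. -/
lemma w_le_fw (x : ℝ) (hx : 0 < x) :
    wCase2 x ≤ (if q1 x then (1:ℝ) else 0) + ((1/2) * (if q2 x then (1:ℝ) else 0) +
      ((3/7) * (if q3 x then (1:ℝ) else 0) + ((1/3) * (if q4 x then (1:ℝ) else 0) +
      ((1/4) * (if q5 x then (1:ℝ) else 0) + (if qS x then wCase2 x else 0))))) := by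
  simp only [q1, q2, q3, q4, q5, qS, decide_eq_true_eq]
  rcases le_or_gt x (1/5) with h5 | h5
  · rw [if_neg (by intro hh; linarith), if_neg (by rintro ⟨a, b⟩; linarith),
      if_neg (by rintro ⟨a, b⟩; linarith), if_neg (by rintro ⟨a, b⟩; linarith),
      if_neg (by rintro ⟨a, b⟩; linarith), if_pos h5]
    norm_num
  rcases le_or_gt x (1/4) with h4 | h4
  · rw [if_neg (by intro hh; linarith), if_neg (by rintro ⟨a, b⟩; linarith),
      if_neg (by rintro ⟨a, b⟩; linarith), if_neg (by rintro ⟨a, b⟩; linarith),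
      if_pos ⟨h5, h4⟩, if_neg (by intro hh; linarith), wCase2_bucket5 x h5 h4]
    norm_num
  rcases le_or_gt x (1/3) with h3 | h3
  · rw [if_neg (by intro hh; linarith), if_neg (by rintro ⟨a, b⟩; linarith),
      if_neg (by rintro ⟨a, b⟩; linarith), if_pos ⟨h4, h3⟩,
      if_neg (by rintro ⟨a, b⟩; linarith), if_neg (by intro hh; linarith),
      wCase2_bucket4 x h4 h3]
    norm_num
  rcases le_or_gt x (37/96) with h37 | h37
  · rw [if_neg (by intro hh; linarith), if_neg (by rintro ⟨a, b⟩; linarith),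
      if_pos ⟨h3, h37⟩, if_neg (by rintro ⟨a, b⟩; linarith),
      if_neg (by rintro ⟨a, b⟩; linarith), if_neg (by intro hh; linarith),
      wCase2_bucket3 x h3 h37]
    norm_num
  rcases le_or_gt x (1/2) with h2 | h2
  · rw [if_neg (by intro hh; linarith), if_pos ⟨h37, h2⟩,
      if_neg (by rintro ⟨a, b⟩; linarith), if_neg (by rintro ⟨a, b⟩; linarith),
      if_neg (by rintro ⟨a, b⟩; linarith), if_neg (by intro hh; linarith),
      wCase2_bucket2 x h37 h2]
    norm_num
  · rw [if_pos h2, if_neg (by rintro ⟨a, b⟩; linarith), if_neg (by rintro ⟨a, b⟩; linarith),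
      if_neg (by rintro ⟨a, b⟩; linarith), if_neg (by rintro ⟨a, b⟩; linarith),
      if_neg (by intro hh; linarith), wCase2_bucket1 x h2]
    norm_num

/-- The bucket lower sizes are below the size. -/
lemma glow_le (x : ℝ) (hx : 0 < x) :
    (1/2) * (if q1 x then (1:ℝ) else 0) + ((37/96) * (if q2 x then (1:ℝ) else 0) +
      ((1/3) * (if q3 x then (1:ℝ) else 0) + ((1/4) * (if q4 x then (1:ℝ) else 0) +
      ((1/5) * (if q5 x then (1:ℝ) else 0) + (if qS x then x else 0))))) ≤ x := by
  simp only [q1, q2, q3, q4, q5, qS, decide_eq_true_eq]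
  rcases le_or_gt x (1/5) with h5 | h5
  · rw [if_neg (by intro hh; linarith), if_neg (by rintro ⟨a, b⟩; linarith),
      if_neg (by rintro ⟨a, b⟩; linarith), if_neg (by rintro ⟨a, b⟩; linarith),
      if_neg (by rintro ⟨a, b⟩; linarith), if_pos h5]
    norm_num
  rcases le_or_gt x (1/4) with h4 | h4
  · rw [if_neg (by intro hh; linarith), if_neg (by rintro ⟨a, b⟩; linarith),
      if_neg (by rintro ⟨a, b⟩; linarith), if_neg (by rintro ⟨a, b⟩; linarith),
      if_pos ⟨h5, h4⟩, if_neg (by intro hh; linarith)]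
    norm_num
    linarith
  rcases le_or_gt x (1/3) with h3 | h3
  · rw [if_neg (by intro hh; linarith), if_neg (by rintro ⟨a, b⟩; linarith),
      if_neg (by rintro ⟨a, b⟩; linarith), if_pos ⟨h4, h3⟩,
      if_neg (by rintro ⟨a, b⟩; linarith), if_neg (by intro hh; linarith)]
    norm_num
    linarith
  rcases le_or_gt x (37/96) with h37 | h37
  · rw [if_neg (by intro hh; linarith), if_neg (by rintro ⟨a, b⟩; linarith),
      if_pos ⟨h3, h37⟩, if_neg (by rintro ⟨a, b⟩; linarith),
      if_neg (by rintro ⟨a, b⟩; linarith), if_neg (by intro hh; linarith)]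
    norm_num
    linarith
  rcases le_or_gt x (1/2) with h2 | h2
  · rw [if_neg (by intro hh; linarith), if_pos ⟨h37, h2⟩,
      if_neg (by rintro ⟨a, b⟩; linarith), if_neg (by rintro ⟨a, b⟩; linarith),
      if_neg (by rintro ⟨a, b⟩; linarith), if_neg (by intro hh; linarith)]
    norm_num
    linarith
  · rw [if_pos h2, if_neg (by rintro ⟨a, b⟩; linarith), if_neg (by rintro ⟨a, b⟩; linarith),
      if_neg (by rintro ⟨a, b⟩; linarith), if_neg (by rintro ⟨a, b⟩; linarith),
      if_neg (by intro hh; linarith)]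
    norm_num
    linarith

/-- Strict version of `glow_le` for items larger than `1/5`. -/
lemma glow_lt (x : ℝ) (h5 : 1/5 < x) :
    (1/2) * (if q1 x then (1:ℝ) else 0) + ((37/96) * (if q2 x then (1:ℝ) else 0) +
      ((1/3) * (if q3 x then (1:ℝ) else 0) + ((1/4) * (if q4 x then (1:ℝ) else 0) +
      ((1/5) * (if q5 x then (1:ℝ) else 0) + (if qS x then x else 0))))) < x := by
  simp only [q1, q2, q3, q4, q5, qS, decide_eq_true_eq]
  rcases le_or_gt x (1/4) with h4 | h4
  · rw [if_neg (by intro hh; linarith), if_neg (by rintro ⟨a, b⟩; linarith),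
      if_neg (by rintro ⟨a, b⟩; linarith), if_neg (by rintro ⟨a, b⟩; linarith),
      if_pos ⟨h5, h4⟩, if_neg (by intro hh; linarith)]
    norm_num
    linarith
  rcases le_or_gt x (1/3) with h3 | h3
  · rw [if_neg (by intro hh; linarith), if_neg (by rintro ⟨a, b⟩; linarith),
      if_neg (by rintro ⟨a, b⟩; linarith), if_pos ⟨h4, h3⟩,
      if_neg (by rintro ⟨a, b⟩; linarith), if_neg (by intro hh; linarith)]
    norm_num
    linarith
  rcases le_or_gt x (37/96) with h37 | h37
  · rw [if_neg (by intro hh; linarith), if_neg (by rintro ⟨a, b⟩; linarith),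
      if_pos ⟨h3, h37⟩, if_neg (by rintro ⟨a, b⟩; linarith),
      if_neg (by rintro ⟨a, b⟩; linarith), if_neg (by intro hh; linarith)]
    norm_num
    linarith
  rcases le_or_gt x (1/2) with h2 | h2
  · rw [if_neg (by intro hh; linarith), if_pos ⟨h37, h2⟩,
      if_neg (by rintro ⟨a, b⟩; linarith), if_neg (by rintro ⟨a, b⟩; linarith),
      if_neg (by rintro ⟨a, b⟩; linarith), if_neg (by intro hh; linarith)]
    norm_num
    linarith
  · rw [if_pos h2, if_neg (by rintro ⟨a, b⟩; linarith), if_neg (by rintro ⟨a, b⟩; linarith),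
      if_neg (by rintro ⟨a, b⟩; linarith), if_neg (by rintro ⟨a, b⟩; linarith),
      if_neg (by intro hh; linarith)]
    norm_num
    linarith

/-- The integer-programming core of the case analysis. -/
lemma key_nat (a b c d e : ℕ)
    (h : 240*a + 185*b + 160*c + 120*d + 96*e ≤ 479)
    (hA : ¬(a = 1 ∧ b = 0 ∧ c = 0 ∧ d = 1 ∧ e = 1))
    (hB : ¬(a = 1 ∧ b = 1 ∧ c = 0 ∧ d = 0 ∧ e = 0)) :
    63840*a + 5985*b + 4560*c + 5320*d + 1596*e ≤ 69580 := by
  have ha : a ≤ 1 := by omega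
  have hb : b ≤ 2 := by omega
  have hc : c ≤ 2 := by omega
  have hd : d ≤ 3 := by omega
  have he : e ≤ 4 := by omega
  interval_cases a <;> interval_cases b <;> interval_cases c <;>
    interval_cases d <;> interval_cases e <;> omega

/-- Any multiset of items from (0,1] with total size at most 1 has total Case-2
weight at most 373/228. -/
theorem case2_weight_bound (l : List ℝ)
    (h : ∀ x ∈ l, 0 < x ∧ x ≤ 1) (hsum : l.sum ≤ 1) :
    (l.map wCase2).sum ≤ 373 / 228 := by
  -- the upper decomposition
  have hup : (l.map wCase2).sum ≤
      (l.map fun x => (if q1 x then (1:ℝ) else 0) + ((1/2) * (if q2 x then (1:ℝ) else 0) +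
        ((3/7) * (if q3 x then (1:ℝ) else 0) + ((1/3) * (if q4 x then (1:ℝ) else 0) +
        ((1/4) * (if q5 x then (1:ℝ) else 0) + (if qS x then wCase2 x else 0)))))).sum :=
    List.sum_le_sum fun x hx => w_le_fw x (h x hx).1
  simp only [sum_map_add, sum_map_smul, sum_map_ind] at hup
  -- the lower (size) decomposition
  have hlow : (l.map fun x => (1/2) * (if q1 x then (1:ℝ) else 0) +
      ((37/96) * (if q2 x then (1:ℝ) else 0) +
      ((1/3) * (if q3 x then (1:ℝ) else 0) + ((1/4) * (if q4 x then (1:ℝ) else 0) +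
      ((1/5) * (if q5 x then (1:ℝ) else 0) + (if qS x then x else 0)))))).sum ≤ l.sum := by
    have := List.sum_le_sum (l := l) (g := id) fun x hx => glow_le x (h x hx).1
    rwa [List.map_id] at this
  simp only [sum_map_add, sum_map_smul, sum_map_ind] at hlow
  -- nonnegativity of the small part
  have hs0 : 0 ≤ (l.map fun x => if qS x then x else 0).sum := by
    apply List.sum_nonneg
    intro y hy
    obtain ⟨x, hx, rfl⟩ := List.mem_map.1 hy
    by_cases hq : qS x = true
    · rw [if_pos hq]; exact (h x hx).1.le
    · rw [if_neg hq]
  -- every small item is at most the small sum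
  have hxles : ∀ x ∈ l, x ≤ 1/5 → x ≤ (l.map fun x => if qS x then x else 0).sum := by
    intro x hx hx5
    have hmem := List.mem_map_of_mem (f := fun x => if qS x then x else 0) hx
    have hnn : ∀ y ∈ (l.map fun x => if qS x then x else 0), 0 ≤ y := by
      intro y hy
      obtain ⟨z, hz, rfl⟩ := List.mem_map.1 hy
      by_cases hq : qS z = true
      · rw [if_pos hq]; exact (h z hz).1.le
      · rw [if_neg hq]
    have := List.single_le_sum hnn _ hmem
    simpa only [if_pos (show qS x = true from decide_eq_true hx5)] using this
  -- the three slope bounds for the small part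
  have ht65 : (l.map fun x => if qS x then wCase2 x else 0).sum ≤
      6/5 * (l.map fun x => if qS x then x else 0).sum := by
    have h1 : (l.map fun x => if qS x then wCase2 x else 0).sum ≤
        (l.map fun x => (6:ℝ)/5 * (if qS x then x else 0)).sum := by
      apply List.sum_le_sum
      intro x hx
      by_cases hq : qS x = true
      · rw [if_pos hq, if_pos hq]
        exact wCase2_slope5 x (h x hx).1 (of_decide_eq_true hq)
      · rw [if_neg hq, if_neg hq]; norm_num
    rwa [sum_map_smul] at h1
  have htA : (l.map fun x => if qS x then x else 0).sum ≤ 1/20 →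
      (l.map fun x => if qS x then wCase2 x else 0).sum ≤
      20/19 * (l.map fun x => if qS x then x else 0).sum := by
    intro hs20
    have h1 : (l.map fun x => if qS x then wCase2 x else 0).sum ≤
        (l.map fun x => (20:ℝ)/19 * (if qS x then x else 0)).sum := by
      apply List.sum_le_sum
      intro x hx
      by_cases hq : qS x = true
      · rw [if_pos hq, if_pos hq]
        have hx5 : x ≤ 1/5 := of_decide_eq_true hq
        have hx20 : x ≤ 1/20 := le_trans (hxles x hx hx5) hs20
        rw [wCase2_small x hx20]; linarith
      · rw [if_neg hq, if_neg hq]; norm_num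
    rwa [sum_map_smul] at h1
  have htB : (l.map fun x => if qS x then x else 0).sum ≤ 1/8 →
      (l.map fun x => if qS x then wCase2 x else 0).sum ≤
      9/8 * (l.map fun x => if qS x then x else 0).sum := by
    intro hs8
    have h1 : (l.map fun x => if qS x then wCase2 x else 0).sum ≤
        (l.map fun x => (9:ℝ)/8 * (if qS x then x else 0)).sum := by
      apply List.sum_le_sum
      intro x hx
      by_cases hq : qS x = true
      · rw [if_pos hq, if_pos hq]
        have hx5 : x ≤ 1/5 := of_decide_eq_true hq
        have hx8 : x ≤ 1/8 := le_trans (hxles x hx hx5) hs8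
        exact wCase2_slope8 x (h x hx).1 hx8
      · rw [if_neg hq, if_neg hq]; norm_num
    rwa [sum_map_smul] at h1
  by_cases hA : l.countP q1 = 1 ∧ l.countP q2 = 0 ∧ l.countP q3 = 0 ∧
      l.countP q4 = 1 ∧ l.countP q5 = 1
  · -- tight case: big + k2 + k3, residual at most 1/20
    obtain ⟨e1, e2, e3, e4, e5⟩ := hA
    have c1 : ((l.countP q1 : ℕ) : ℝ) = 1 := by rw [e1]; norm_num
    have c2 : ((l.countP q2 : ℕ) : ℝ) = 0 := by rw [e2]; norm_num
    have c3 : ((l.countP q3 : ℕ) : ℝ) = 0 := by rw [e3]; norm_num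
    have c4 : ((l.countP q4 : ℕ) : ℝ) = 1 := by rw [e4]; norm_num
    have c5 : ((l.countP q5 : ℕ) : ℝ) = 1 := by rw [e5]; norm_num
    rw [c1, c2, c3, c4, c5] at hup hlow
    have hs20 : (l.map fun x => if qS x then x else 0).sum ≤ 1/20 := by linarith
    have := htA hs20
    linarith
  by_cases hB : l.countP q1 = 1 ∧ l.countP q2 = 1 ∧ l.countP q3 = 0 ∧
      l.countP q4 = 0 ∧ l.countP q5 = 0
  · -- case big + b, residual at most 11/96 ≤ 1/8
    obtain ⟨e1, e2, e3, e4, e5⟩ := hB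
    have c1 : ((l.countP q1 : ℕ) : ℝ) = 1 := by rw [e1]; norm_num
    have c2 : ((l.countP q2 : ℕ) : ℝ) = 1 := by rw [e2]; norm_num
    have c3 : ((l.countP q3 : ℕ) : ℝ) = 0 := by rw [e3]; norm_num
    have c4 : ((l.countP q4 : ℕ) : ℝ) = 0 := by rw [e4]; norm_num
    have c5 : ((l.countP q5 : ℕ) : ℝ) = 0 := by rw [e5]; norm_num
    rw [c1, c2, c3, c4, c5] at hup hlow
    have hs8 : (l.map fun x => if qS x then x else 0).sum ≤ 1/8 := by linarith
    have hs96 : (l.map fun x => if qS x then x else 0).sum ≤ 11/96 := by linarith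
    have := htB hs8
    linarith
  -- generic case
  have hK : 240 * l.countP q1 + 185 * l.countP q2 + 160 * l.countP q3 +
      120 * l.countP q4 + 96 * l.countP q5 ≤ 479 := by
    rcases Nat.eq_zero_or_pos (l.countP q1 + l.countP q2 + l.countP q3 +
      l.countP q4 + l.countP q5) with hz | hpos
    · omega
    · have hwit : ∃ a ∈ l, (1:ℝ)/5 < a := by
        have hc : 0 < l.countP q1 ∨ 0 < l.countP q2 ∨ 0 < l.countP q3 ∨
            0 < l.countP q4 ∨ 0 < l.countP q5 := by omega
        rcases hc with hc | hc | hc | hc | hc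
        · obtain ⟨a, ha, hqa⟩ := List.countP_pos_iff.1 hc
          simp only [q1, decide_eq_true_eq] at hqa
          exact ⟨a, ha, by linarith⟩
        · obtain ⟨a, ha, hqa⟩ := List.countP_pos_iff.1 hc
          simp only [q2, decide_eq_true_eq] at hqa
          exact ⟨a, ha, by linarith [hqa.1]⟩
        · obtain ⟨a, ha, hqa⟩ := List.countP_pos_iff.1 hc
          simp only [q3, decide_eq_true_eq] at hqa
          exact ⟨a, ha, by linarith [hqa.1]⟩
        · obtain ⟨a, ha, hqa⟩ := List.countP_pos_iff.1 hc
          simp only [q4, decide_eq_true_eq] at hqa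
          exact ⟨a, ha, by linarith [hqa.1]⟩
        · obtain ⟨a, ha, hqa⟩ := List.countP_pos_iff.1 hc
          simp only [q5, decide_eq_true_eq] at hqa
          exact ⟨a, ha, by linarith [hqa.1]⟩
      obtain ⟨a, ha, ha5⟩ := hwit
      have hstrict : (l.map fun x => (1/2) * (if q1 x then (1:ℝ) else 0) +
          ((37/96) * (if q2 x then (1:ℝ) else 0) +
          ((1/3) * (if q3 x then (1:ℝ) else 0) + ((1/4) * (if q4 x then (1:ℝ) else 0) +
          ((1/5) * (if q5 x then (1:ℝ) else 0) + (if qS x then x else 0)))))).sum < l.sum := by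
        have := List.sum_lt_sum (l := l)
          (fun x => (1/2) * (if q1 x then (1:ℝ) else 0) +
            ((37/96) * (if q2 x then (1:ℝ) else 0) +
            ((1/3) * (if q3 x then (1:ℝ) else 0) + ((1/4) * (if q4 x then (1:ℝ) else 0) +
            ((1/5) * (if q5 x then (1:ℝ) else 0) + (if qS x then x else 0)))))) id
          (fun x hx => glow_le x (h x hx).1) ⟨a, ha, glow_lt a ha5⟩
        rwa [List.map_id] at this
      simp only [sum_map_add, sum_map_smul, sum_map_ind] at hstrict
      have hr : 240*((l.countP q1 : ℕ):ℝ) + 185*((l.countP q2 : ℕ):ℝ) +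
          160*((l.countP q3 : ℕ):ℝ) + 120*((l.countP q4 : ℕ):ℝ) +
          96*((l.countP q5 : ℕ):ℝ) < 480 := by linarith
      have hr' : 240 * l.countP q1 + 185 * l.countP q2 + 160 * l.countP q3 +
          120 * l.countP q4 + 96 * l.countP q5 < 480 := by exact_mod_cast hr
      omega
  have hkey := key_nat _ _ _ _ _ hK hA hB
  have hkeyR : 63840*((l.countP q1 : ℕ):ℝ) + 5985*((l.countP q2 : ℕ):ℝ) +
      4560*((l.countP q3 : ℕ):ℝ) + 5320*((l.countP q4 : ℕ):ℝ) +
      1596*((l.countP q5 : ℕ):ℝ) ≤ 69580 := by exact_mod_cast hkey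
  linarith
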